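/- Let $\beta$ be a one-dimensional fractional Brownian motion with Hurst parameter $H \in (0, 3/4)$. Then there is a constant $c_H > 0$ such that for all $n \geq 1$, $\mathbf{E}\big| \frac{1}{n} \sum_{k=0}^{n-1} (|\beta_{k+1} - \beta_k|^2 - 1) \big|^2 \leq c_H / n$. -/

import Mathlib

open MeasureTheory ProbabilityTheory Filter

/-- A process `β : ℝ → Ω → ℝ` is a (one-dimensional) fractional Brownian motion with Hurst
parameter `H` under `P` if it is a centered Gaussian process (every finite linear combination
of its values is a centered Gaussian random variable) with covariance
`E(β_s β_t) = (|s|^{2H} + |t|^{2H} - |s-t|^{2H})/2`. -/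
def IsFBM {Ω : Type*} [MeasurableSpace Ω] (P : Measure Ω) (H : ℝ) (β : ℝ → Ω → ℝ) : Prop :=
  (∀ t, Measurable (β t)) ∧
  (∀ (n : ℕ) (c : Fin n → ℝ) (t : Fin n → ℝ), ∃ v : NNReal,
    P.map (fun ω => ∑ i, c i * β (t i) ω) = gaussianReal 0 v) ∧
  (∀ s t : ℝ, ∫ ω, β s ω * β t ω ∂P =
    (|s| ^ (2 * H) + |t| ^ (2 * H) - |s - t| ^ (2 * H)) / 2)

section FBMpre
open Real MeasureTheory Filter

namespace FBMaux

lemma abs_pow_le (k : ℕ) (x : ℝ) : |x| ^ k ≤ k.factorial * Real.exp |x| := by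
  have h := Real.sum_le_exp_of_nonneg (abs_nonneg x) (k + 1)
  have h2 : |x| ^ k / k.factorial ≤ ∑ i ∈ Finset.range (k+1), |x| ^ i / i.factorial := by
    refine Finset.single_le_sum (f := fun i => |x| ^ i / (i.factorial : ℝ)) ?_ ?_
    · intro i _; positivity
    · simp
  have hk : (0:ℝ) < k.factorial := by positivity
  calc |x| ^ k = k.factorial * (|x| ^ k / k.factorial) := by field_simp
  _ ≤ k.factorial * Real.exp |x| := by
      apply mul_le_mul_of_nonneg_left (h2.trans h) (le_of_lt hk)

lemma integrable_pow_gauss (k : ℕ) {b : ℝ} (hb : 0 < b) :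
    Integrable (fun x : ℝ => x ^ k * Real.exp (-b * x ^ 2)) := by
  have hcont : Continuous fun x : ℝ => x ^ k * Real.exp (-b * x ^ 2) := by continuity
  refine Integrable.mono' ((integrable_exp_neg_mul_sq (by positivity : 0 < b/2)).const_mul
    ((k.factorial : ℝ) * Real.exp (1/(2*b)))) hcont.aestronglyMeasurable (ae_of_all _ ?_)
  intro x
  rw [norm_mul, norm_pow, Real.norm_eq_abs, Real.norm_eq_abs, Real.abs_exp]
  have h1 : |x| ^ k ≤ k.factorial * Real.exp |x| := abs_pow_le k x
  have h2 : |x| ≤ b/2 * x^2 + 1/(2*b) := by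
    have hb2 : (0:ℝ) < 2 * b := by positivity
    rw [← mul_le_mul_iff_right₀ hb2]
    have hx2 : |x| ^ 2 = x ^ 2 := sq_abs x
    have heq : 2 * b * (b/2 * x^2 + 1/(2*b)) = b^2 * x^2 + 1 := by field_simp
    nlinarith [sq_nonneg (b * |x| - 1)]
  have h3 : Real.exp |x| * Real.exp (-b * x ^ 2) ≤
      Real.exp (1/(2*b)) * Real.exp (-(b/2) * x ^ 2) := by
    rw [← Real.exp_add, ← Real.exp_add]
    apply Real.exp_le_exp.2; nlinarith
  calc |x| ^ k * Real.exp (-b * x ^ 2)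
      ≤ (k.factorial * Real.exp |x|) * Real.exp (-b * x ^ 2) := by
        apply mul_le_mul_of_nonneg_right h1 (Real.exp_nonneg _)
  _ = (k.factorial : ℝ) * (Real.exp |x| * Real.exp (-b * x ^ 2)) := by ring
  _ ≤ (k.factorial : ℝ) * (Real.exp (1/(2*b)) * Real.exp (-(b/2) * x ^ 2)) := by
        apply mul_le_mul_of_nonneg_left h3 (by positivity)
  _ = (k.factorial : ℝ) * Real.exp (1/(2*b)) * Real.exp (-(b/2) * x ^ 2) := by ring

lemma gauss_ibp (n : ℕ) {b : ℝ} (hb : 0 < b) :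
    ∫ x : ℝ, x ^ (n + 2) * Real.exp (-b * x ^ 2)
      = (n + 1) / (2 * b) * ∫ x : ℝ, x ^ n * Real.exp (-b * x ^ 2) := by
  set f : ℝ → ℝ := fun x => x ^ (n+1) * Real.exp (-b * x ^ 2) with hf
  set f' : ℝ → ℝ := fun x => (n+1) * (x ^ n * Real.exp (-b * x ^ 2))
      - 2 * b * (x ^ (n+2) * Real.exp (-b * x ^ 2)) with hf'
  have hderiv : ∀ x : ℝ, HasDerivAt f (f' x) x := by
    intro x
    have h1 : HasDerivAt (fun x : ℝ => x ^ (n+1)) ((n+1) * x ^ n) x := by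
      simpa using hasDerivAt_pow (n+1) x
    have h2 : HasDerivAt (fun x : ℝ => Real.exp (-b * x ^ 2)) ((-b * (2*x)) * Real.exp (-b * x ^ 2)) x := by
      have h3 : HasDerivAt (fun x : ℝ => -b * x ^ 2) (-b * (2*x)) x := by
        simpa using (hasDerivAt_pow 2 x).const_mul (-b)
      simpa [mul_comm] using h3.exp
    have : HasDerivAt f _ x := h1.mul h2
    convert this using 1
    simp only [hf']
    ring
  have hint' : Integrable f' := by
    exact ((integrable_pow_gauss n hb).const_mul _).sub ((integrable_pow_gauss (n+2) hb).const_mul _)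
  have hint : Integrable f := integrable_pow_gauss (n+1) hb
  have h0 := integral_eq_zero_of_hasDerivAt_of_integrable hderiv hint' hint
  rw [hf'] at h0
  rw [integral_sub ((integrable_pow_gauss n hb).const_mul _)
      ((integrable_pow_gauss (n+2) hb).const_mul _), integral_const_mul, integral_const_mul] at h0
  have h2b : (2 * b) ≠ 0 := by positivity
  rw [div_mul_eq_mul_div, eq_div_iff h2b]
  linarith [h0]

lemma gauss_J0 {b : ℝ} (hb : 0 < b) :
    ∫ x : ℝ, x ^ 0 * Real.exp (-b * x ^ 2) = Real.sqrt (π / b) := by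
  simpa using integral_gaussian b

lemma gauss_J2 {b : ℝ} (hb : 0 < b) :
    ∫ x : ℝ, x ^ 2 * Real.exp (-b * x ^ 2) = 1 / (2*b) * Real.sqrt (π / b) := by
  have := gauss_ibp 0 hb
  rw [gauss_J0 hb] at this
  simpa using this

lemma gauss_J4 {b : ℝ} (hb : 0 < b) :
    ∫ x : ℝ, x ^ 4 * Real.exp (-b * x ^ 2) = 3 / (4*b^2) * Real.sqrt (π / b) := by
  have := gauss_ibp 2 hb
  rw [gauss_J2 hb] at this
  rw [this]; ring

end FBMaux

open ProbabilityTheory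
open scoped NNReal ENNReal

namespace FBMaux2

lemma pdf_eq {v : ℝ≥0} (x : ℝ) :
    gaussianPDFReal 0 v x
      = (Real.sqrt (2 * π * v))⁻¹ * (Real.exp (-((2 * (v:ℝ))⁻¹) * x ^ 2)) := by
  simp only [gaussianPDFReal_def]
  rw [show -(x - 0) ^ 2 / (2 * (v:ℝ)) = -((2 * (v:ℝ))⁻¹) * x ^ 2 by rw [sub_zero]; ring]

lemma integral_pow_gaussianReal {v : ℝ≥0} (hv : v ≠ 0) (k : ℕ) :
    ∫ x, x ^ k ∂(gaussianReal 0 v)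
      = (Real.sqrt (2 * π * v))⁻¹ * ∫ x : ℝ, x ^ k * Real.exp (-((2 * (v:ℝ))⁻¹) * x ^ 2) := by
  rw [gaussianReal_of_var_ne_zero 0 hv]
  have hmeas : Measurable fun x => (gaussianPDFReal 0 v x).toNNReal :=
    (measurable_gaussianPDFReal 0 v).real_toNNReal
  have hpdf : (gaussianPDF 0 v) = fun x => ((fun x => (gaussianPDFReal 0 v x).toNNReal) x : ℝ≥0∞) := by
    funext x
    simp [gaussianPDF, ENNReal.ofReal]
  rw [hpdf, integral_withDensity_eq_integral_smul hmeas]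
  rw [← integral_const_mul]
  congr 1
  funext x
  simp only [NNReal.smul_def, smul_eq_mul]
  rw [Real.coe_toNNReal _ (gaussianPDFReal_nonneg 0 v x), pdf_eq]
  ring

lemma integrable_pow_gaussianReal (v : ℝ≥0) (k : ℕ) :
    Integrable (fun x => x ^ k) (gaussianReal 0 v) := by
  by_cases hv : v = 0
  · rw [hv, gaussianReal_zero_var]
    exact (integrable_const ((0:ℝ) ^ k)).congr (ae_eq_dirac (fun x : ℝ => x ^ k)).symm
  · rw [gaussianReal_of_var_ne_zero 0 hv]
    have hmeas : Measurable fun x => (gaussianPDFReal 0 v x).toNNReal :=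
      (measurable_gaussianPDFReal 0 v).real_toNNReal
    have hpdf : (gaussianPDF 0 v) = fun x => ((fun x => (gaussianPDFReal 0 v x).toNNReal) x : ℝ≥0∞) := by
      funext x; simp [gaussianPDF, ENNReal.ofReal]
    rw [hpdf, integrable_withDensity_iff_integrable_smul hmeas]
    have hb : (0:ℝ) < (2 * (v:ℝ))⁻¹ := by
      have : (0:ℝ) < v := lt_of_le_of_ne v.coe_nonneg (fun h => hv (by exact_mod_cast h.symm))
      positivity
    refine (((FBMaux.integrable_pow_gauss k hb).const_mul
        ((Real.sqrt (2 * π * v))⁻¹)).congr ?_)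
    refine (ae_of_all _ fun x => ?_)
    simp only [NNReal.smul_def, smul_eq_mul]
    rw [Real.coe_toNNReal _ (gaussianPDFReal_nonneg 0 v x), pdf_eq]
    ring

lemma sqrt_ne {v : ℝ≥0} (hv : v ≠ 0) : Real.sqrt (2 * π * v) ≠ 0 := by
  have hvpos : (0:ℝ) < v := lt_of_le_of_ne v.coe_nonneg (fun h => hv (by exact_mod_cast h.symm))
  have : (0:ℝ) < 2 * π * v := by positivity
  positivity

lemma pi_b {v : ℝ≥0} (hv : v ≠ 0) : π / (2 * (v:ℝ))⁻¹ = 2 * π * v := by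
  have hvpos : (0:ℝ) < v := lt_of_le_of_ne v.coe_nonneg (fun h => hv (by exact_mod_cast h.symm))
  field_simp

lemma integral_sq_gaussianReal (v : ℝ≥0) :
    ∫ x, x ^ 2 ∂(gaussianReal 0 v) = v := by
  by_cases hv : v = 0
  · rw [hv, gaussianReal_zero_var]
    rw [integral_dirac]; simp
  · have hvpos : (0:ℝ) < v := lt_of_le_of_ne v.coe_nonneg (fun h => hv (by exact_mod_cast h.symm))
    have hb : (0:ℝ) < (2 * (v:ℝ))⁻¹ := by positivity
    rw [integral_pow_gaussianReal hv 2, FBMaux.gauss_J2 hb, pi_b hv]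
    have hs := sqrt_ne hv
    have h2 : (2 * (v:ℝ)) ≠ 0 := by positivity
    field_simp
    try ring

lemma integral_four_gaussianReal (v : ℝ≥0) :
    ∫ x, x ^ 4 ∂(gaussianReal 0 v) = 3 * (v:ℝ) ^ 2 := by
  by_cases hv : v = 0
  · rw [hv, gaussianReal_zero_var]
    rw [integral_dirac]; simp
  · have hvpos : (0:ℝ) < v := lt_of_le_of_ne v.coe_nonneg (fun h => hv (by exact_mod_cast h.symm))
    have hb : (0:ℝ) < (2 * (v:ℝ))⁻¹ := by positivity
    rw [integral_pow_gaussianReal hv 4, FBMaux.gauss_J4 hb, pi_b hv]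
    have hs := sqrt_ne hv
    have h2 : (2 * (v:ℝ)) ≠ 0 := by positivity
    field_simp
    try ring

variable {Ω : Type*} [MeasurableSpace Ω] {P : Measure Ω}

lemma integrable_pow_of_map {Z : Ω → ℝ} (hZ : Measurable Z) {v : ℝ≥0}
    (h : P.map Z = gaussianReal 0 v) (k : ℕ) :
    Integrable (fun ω => Z ω ^ k) P := by
  have h1 : Integrable (fun x : ℝ => x ^ k) (P.map Z) := by
    rw [h]; exact integrable_pow_gaussianReal v k
  rw [integrable_map_measure (by fun_prop) hZ.aemeasurable] at h1
  exact h1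

lemma integral_pow_of_map {Z : Ω → ℝ} (hZ : Measurable Z) {v : ℝ≥0}
    (h : P.map Z = gaussianReal 0 v) (k : ℕ) :
    ∫ ω, Z ω ^ k ∂P = ∫ x, x ^ k ∂(gaussianReal 0 v) := by
  rw [← h, integral_map hZ.aemeasurable (by fun_prop)]

/-- Fourth moment identity for a random variable whose law is a centered Gaussian. -/
lemma fourth_moment {Z : Ω → ℝ} (hZ : Measurable Z) {v : ℝ≥0}
    (h : P.map Z = gaussianReal 0 v) :
    ∫ ω, Z ω ^ 4 ∂P = 3 * (∫ ω, Z ω ^ 2 ∂P) ^ 2 := by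
  rw [integral_pow_of_map hZ h 4, integral_pow_of_map hZ h 2,
    integral_four_gaussianReal, integral_sq_gaussianReal]

end FBMaux2

namespace FBMaux3
open Real MeasureTheory ProbabilityTheory
open scoped NNReal ENNReal

variable {Ω : Type*} [MeasurableSpace Ω] {P : Measure Ω}

lemma young34 (a b : ℝ) : |a ^ 3 * b| ≤ 3/4 * a ^ 4 + 1/4 * b ^ 4 := by
  have h : |a ^ 3 * b| = |a| ^ 3 * |b| := by rw [abs_mul, abs_pow]
  rw [h]
  have ha : (0:ℝ) ≤ |a| := abs_nonneg a
  have hb : (0:ℝ) ≤ |b| := abs_nonneg b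
  have h4 : a ^ 4 = |a| ^ 4 := by rw [← abs_pow, abs_of_nonneg (by positivity)]
  have h4b : b ^ 4 = |b| ^ 4 := by rw [← abs_pow, abs_of_nonneg (by positivity)]
  rw [h4, h4b]
  nlinarith [sq_nonneg (|a| - |b|), sq_nonneg (|a| + |b|), mul_nonneg ha hb,
    sq_nonneg (|a| * |b|), sq_nonneg (|a|^2 - |b|^2), mul_nonneg (mul_nonneg ha ha) hb,
    mul_nonneg (mul_nonneg ha hb) hb]

lemma sq_mul_sq_le (a b : ℝ) : |a ^ 2 * b ^ 2| ≤ 1/2 * a ^ 4 + 1/2 * b ^ 4 := by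
  rw [abs_of_nonneg (by positivity)]
  nlinarith [sq_nonneg (a ^ 2 - b ^ 2)]

lemma abs_mul_le (a b : ℝ) : |a * b| ≤ 1/2 * a ^ 2 + 1/2 * b ^ 2 := by
  rw [abs_mul]
  nlinarith [sq_nonneg (|a| - |b|), sq_abs a, sq_abs b, abs_nonneg a, abs_nonneg b]

variable {X Y : Ω → ℝ}

/-- the basic integrability and 4th-moment package -/
lemma pair_moments [IsProbabilityMeasure P]
    (hXm : Measurable X) (hYm : Measurable Y)
    (hX : ∃ v : ℝ≥0, P.map X = gaussianReal 0 v)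
    (hY : ∃ v : ℝ≥0, P.map Y = gaussianReal 0 v)
    (hXpY : ∃ v : ℝ≥0, P.map (fun ω => X ω + Y ω) = gaussianReal 0 v)
    (hXmY : ∃ v : ℝ≥0, P.map (fun ω => X ω - Y ω) = gaussianReal 0 v) :
    Integrable (fun ω => (X ω ^ 2 - 1) * (Y ω ^ 2 - 1)) P ∧
    Integrable (fun ω => X ω * Y ω) P ∧
    ∫ ω, (X ω ^ 2 - 1) * (Y ω ^ 2 - 1) ∂P
      = (∫ ω, X ω ^ 2 ∂P) * (∫ ω, Y ω ^ 2 ∂P) + 2 * (∫ ω, X ω * Y ω ∂P) ^ 2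
        - (∫ ω, X ω ^ 2 ∂P) - (∫ ω, Y ω ^ 2 ∂P) + 1 := by
  obtain ⟨vX, hvX⟩ := hX
  obtain ⟨vY, hvY⟩ := hY
  obtain ⟨vP, hvP⟩ := hXpY
  obtain ⟨vM, hvM⟩ := hXmY
  -- integrability of pure powers
  have iX2 := FBMaux2.integrable_pow_of_map hXm hvX 2
  have iY2 := FBMaux2.integrable_pow_of_map hYm hvY 2
  have iX4 := FBMaux2.integrable_pow_of_map hXm hvX 4
  have iY4 := FBMaux2.integrable_pow_of_map hYm hvY 4
  -- mixed integrability
  have iXY : Integrable (fun ω => X ω * Y ω) P := by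
    refine Integrable.mono' ((iX2.const_mul (1/2)).add (iY2.const_mul (1/2)))
      ((hXm.mul hYm).aestronglyMeasurable) (ae_of_all _ fun ω => ?_)
    simpa only [Real.norm_eq_abs, Pi.add_apply] using abs_mul_le (X ω) (Y ω)
  have iX3Y : Integrable (fun ω => X ω ^ 3 * Y ω) P := by
    refine Integrable.mono' ((iX4.const_mul (3/4)).add (iY4.const_mul (1/4)))
      (((hXm.pow_const 3).mul hYm).aestronglyMeasurable) (ae_of_all _ fun ω => ?_)
    simpa only [Real.norm_eq_abs, Pi.add_apply] using young34 (X ω) (Y ω)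
  have iXY3 : Integrable (fun ω => X ω * Y ω ^ 3) P := by
    refine Integrable.mono' ((iY4.const_mul (3/4)).add (iX4.const_mul (1/4)))
      ((hXm.mul (hYm.pow_const 3)).aestronglyMeasurable) (ae_of_all _ fun ω => ?_)
    have := young34 (Y ω) (X ω)
    rw [Real.norm_eq_abs]
    calc |X ω * Y ω ^ 3| = |Y ω ^ 3 * X ω| := by rw [mul_comm]
    _ ≤ 3/4 * Y ω ^ 4 + 1/4 * X ω ^ 4 := young34 (Y ω) (X ω)
  have iX2Y2 : Integrable (fun ω => X ω ^ 2 * Y ω ^ 2) P := by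
    refine Integrable.mono' ((iX4.const_mul (1/2)).add (iY4.const_mul (1/2)))
      (((hXm.pow_const 2).mul (hYm.pow_const 2)).aestronglyMeasurable)
      (ae_of_all _ fun ω => ?_)
    simpa only [Real.norm_eq_abs, Pi.add_apply] using sq_mul_sq_le (X ω) (Y ω)
  -- abbreviations
  set p := ∫ ω, X ω ^ 2 ∂P with hp
  set q := ∫ ω, Y ω ^ 2 ∂P with hq
  set r := ∫ ω, X ω * Y ω ∂P with hr
  set A := ∫ ω, X ω ^ 3 * Y ω ∂P with hA
  set B := ∫ ω, X ω * Y ω ^ 3 ∂P with hB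
  set C := ∫ ω, X ω ^ 2 * Y ω ^ 2 ∂P with hC
  -- second moments of sums
  have s2p : ∫ ω, (X ω + Y ω) ^ 2 ∂P = p + 2 * r + q := by
    have : (fun ω => (X ω + Y ω) ^ 2)
        = fun ω => X ω ^ 2 + (2 * (X ω * Y ω) + Y ω ^ 2) := by funext ω; ring
    have i1 : Integrable (fun ω => 2 * (X ω * Y ω)) P := iXY.const_mul 2
    have i2 : Integrable (fun ω => 2 * (X ω * Y ω) + Y ω ^ 2) P := i1.add iY2
    rw [this, integral_add iX2 i2, integral_add i1 iY2, integral_const_mul]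
    ring
  have s2m : ∫ ω, (X ω - Y ω) ^ 2 ∂P = p - 2 * r + q := by
    have : (fun ω => (X ω - Y ω) ^ 2)
        = fun ω => X ω ^ 2 + (-2 * (X ω * Y ω) + Y ω ^ 2) := by funext ω; ring
    have i1 : Integrable (fun ω => -2 * (X ω * Y ω)) P := iXY.const_mul (-2)
    have i2 : Integrable (fun ω => -2 * (X ω * Y ω) + Y ω ^ 2) P := i1.add iY2
    rw [this, integral_add iX2 i2, integral_add i1 iY2, integral_const_mul]
    ring
  -- fourth moments of sums
  have s4p : ∫ ω, (X ω + Y ω) ^ 4 ∂P = ∫ ω, X ω ^ 4 ∂P + 4 * A + 6 * C + 4 * B + ∫ ω, Y ω ^ 4 ∂P := by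
    have : (fun ω => (X ω + Y ω) ^ 4)
        = fun ω => X ω ^ 4 + (4 * (X ω ^ 3 * Y ω) + (6 * (X ω ^ 2 * Y ω ^ 2)
            + (4 * (X ω * Y ω ^ 3) + Y ω ^ 4))) := by funext ω; ring
    have j1 : Integrable (fun ω => 4 * (X ω * Y ω ^ 3)) P := iXY3.const_mul 4
    have j2 : Integrable (fun ω => 4 * (X ω * Y ω ^ 3) + Y ω ^ 4) P := j1.add iY4
    have j3 : Integrable (fun ω => 6 * (X ω ^ 2 * Y ω ^ 2)) P := iX2Y2.const_mul 6
    have j4 : Integrable (fun ω => 6 * (X ω ^ 2 * Y ω ^ 2) + (4 * (X ω * Y ω ^ 3) + Y ω ^ 4)) P := j3.add j2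
    have j5 : Integrable (fun ω => 4 * (X ω ^ 3 * Y ω)) P := iX3Y.const_mul 4
    have j6 : Integrable (fun ω => 4 * (X ω ^ 3 * Y ω) + (6 * (X ω ^ 2 * Y ω ^ 2) + (4 * (X ω * Y ω ^ 3) + Y ω ^ 4))) P := j5.add j4
    rw [this, integral_add iX4 j6, integral_add j5 j4, integral_add j3 j2,
      integral_add j1 iY4, integral_const_mul, integral_const_mul, integral_const_mul]
    ring
  have s4m : ∫ ω, (X ω - Y ω) ^ 4 ∂P = ∫ ω, X ω ^ 4 ∂P - 4 * A + 6 * C - 4 * B + ∫ ω, Y ω ^ 4 ∂P := by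
    have : (fun ω => (X ω - Y ω) ^ 4)
        = fun ω => X ω ^ 4 + ((-4) * (X ω ^ 3 * Y ω) + (6 * (X ω ^ 2 * Y ω ^ 2)
            + ((-4) * (X ω * Y ω ^ 3) + Y ω ^ 4))) := by funext ω; ring
    have j1 : Integrable (fun ω => (-4) * (X ω * Y ω ^ 3)) P := iXY3.const_mul (-4)
    have j2 : Integrable (fun ω => (-4) * (X ω * Y ω ^ 3) + Y ω ^ 4) P := j1.add iY4
    have j3 : Integrable (fun ω => 6 * (X ω ^ 2 * Y ω ^ 2)) P := iX2Y2.const_mul 6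
    have j4 : Integrable (fun ω => 6 * (X ω ^ 2 * Y ω ^ 2) + ((-4) * (X ω * Y ω ^ 3) + Y ω ^ 4)) P := j3.add j2
    have j5 : Integrable (fun ω => (-4) * (X ω ^ 3 * Y ω)) P := iX3Y.const_mul (-4)
    have j6 : Integrable (fun ω => (-4) * (X ω ^ 3 * Y ω) + (6 * (X ω ^ 2 * Y ω ^ 2) + ((-4) * (X ω * Y ω ^ 3) + Y ω ^ 4))) P := j5.add j4
    rw [this, integral_add iX4 j6, integral_add j5 j4, integral_add j3 j2,
      integral_add j1 iY4, integral_const_mul, integral_const_mul, integral_const_mul]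
    ring
  -- gaussian fourth-moment identities
  have gX := FBMaux2.fourth_moment hXm hvX
  have gY := FBMaux2.fourth_moment hYm hvY
  have gP := FBMaux2.fourth_moment (Z := fun ω => X ω + Y ω) (hXm.add hYm) hvP
  have gM := FBMaux2.fourth_moment (Z := fun ω => X ω - Y ω) (hXm.sub hYm) hvM
  rw [s4p, s2p, gX, gY] at gP
  rw [s4m, s2m, gX, gY] at gM
  -- deduce the product moment
  have hCval : C = p * q + 2 * r ^ 2 := by linear_combination (gP + gM) / 12
  -- integrability of the product of centered squares
  have iProd : Integrable (fun ω => (X ω ^ 2 - 1) * (Y ω ^ 2 - 1)) P := by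
    have : (fun ω => (X ω ^ 2 - 1) * (Y ω ^ 2 - 1))
        = fun ω => X ω ^ 2 * Y ω ^ 2 - X ω ^ 2 - Y ω ^ 2 + 1 := by funext ω; ring
    rw [this]
    exact ((iX2Y2.sub iX2).sub iY2).add (integrable_const 1)
  refine ⟨iProd, iXY, ?_⟩
  have heq : (fun ω => (X ω ^ 2 - 1) * (Y ω ^ 2 - 1))
      = fun ω => X ω ^ 2 * Y ω ^ 2 - X ω ^ 2 - Y ω ^ 2 + 1 := by funext ω; ring
  have k1 : Integrable (fun ω => X ω ^ 2 * Y ω ^ 2 - X ω ^ 2) P := iX2Y2.sub iX2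
  have k2 : Integrable (fun ω => X ω ^ 2 * Y ω ^ 2 - X ω ^ 2 - Y ω ^ 2) P := k1.sub iY2
  rw [heq, integral_add k2 (integrable_const 1),
    integral_sub k1 iY2, integral_sub iX2Y2 iX2, integral_const]
  simp only [measure_univ, probReal_univ, ENNReal.toReal_one, smul_eq_mul, mul_one, one_smul]
  try rw [← hC, ← hp, ← hq]
  linarith [hCval]

end FBMaux3

namespace FBMaux4
open Real

noncomputable def rho (H d : ℝ) : ℝ :=
  (|d + 1| ^ (2 * H) + |d - 1| ^ (2 * H) - 2 * |d| ^ (2 * H)) / 2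

lemma rho_neg (H d : ℝ) : rho H (-d) = rho H d := by
  unfold rho
  rw [show |(-d) + 1| = |d - 1| by rw [← abs_neg]; ring_nf,
    show |(-d) - 1| = |d + 1| by rw [← abs_neg]; ring_nf, abs_neg]
  ring

lemma rho_zero {H : ℝ} (hH : 0 < H) : rho H 0 = 1 := by
  unfold rho
  rw [show |(0:ℝ) + 1| = 1 by norm_num, show |(0:ℝ) - 1| = 1 by norm_num, abs_zero,
    Real.one_rpow, Real.zero_rpow (by positivity)]
  norm_num

lemma rho_one_abs {H : ℝ} (hH : 0 < H) (hH2 : H < 3/4) : |rho H 1| ≤ 1 := by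
  unfold rho
  rw [show |(1:ℝ) + 1| = 2 by norm_num, show |(1:ℝ) - 1| = 0 by norm_num,
    show |(1:ℝ)| = 1 by norm_num, Real.one_rpow, Real.zero_rpow (by positivity)]
  rw [abs_le]
  have h1 : (1:ℝ) ≤ 2 := by norm_num
  have h2 : (2:ℝ) ^ (2*H) ≤ 2 ^ (3/2 : ℝ) := Real.rpow_le_rpow_of_exponent_le h1 (by linarith)
  have h3 : (2:ℝ) ^ (3/2 : ℝ) ≤ 2 ^ (2 : ℝ) := Real.rpow_le_rpow_of_exponent_le h1 (by norm_num)
  have h4 : (2:ℝ) ^ (2 : ℝ) = 4 := by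
    rw [show (2:ℝ) = ((2:ℕ):ℝ) by norm_num, Real.rpow_natCast]; norm_num
  have h5 : (0:ℝ) < 2 ^ (2*H) := Real.rpow_pos_of_pos (by norm_num) _
  constructor <;> nlinarith

lemma rho_bound {H : ℝ} (hH : 0 < H) (hH2 : H < 3/4) {d : ℝ} (hd : 2 ≤ d) :
    |rho H d| ≤ 3 * (d - 1) ^ (2 * H - 2) := by
  have hd1 : (1:ℝ) ≤ d - 1 := by linarith
  have hd1' : (0:ℝ) < d - 1 := by linarith
  set g : ℝ → ℝ := fun x => x ^ (2 * H) with hg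
  set g' : ℝ → ℝ := fun x => 2 * H * x ^ (2 * H - 1) with hg'
  have hderiv : ∀ x : ℝ, 0 < x → HasDerivAt g (g' x) x := fun x hx => by
    simpa [hg, hg', mul_comm] using Real.hasDerivAt_rpow_const (p := 2 * H) (Or.inl hx.ne')
  have hderiv' : ∀ x : ℝ, 0 < x →
      HasDerivAt g' (2 * H * ((2 * H - 1) * x ^ (2 * H - 2))) x := fun x hx => by
    have h := (Real.hasDerivAt_rpow_const (p := 2 * H - 1) (Or.inl hx.ne')).const_mul (2 * H)
    rw [show 2 * H - 1 - 1 = 2 * H - 2 by ring] at h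
    exact h
  -- MVT on [d, d+1]
  obtain ⟨a, ha, hga⟩ := exists_hasDerivAt_eq_slope g g' (by linarith : d < d + 1)
    (fun x hx => (hderiv x (by rcases hx with ⟨h1, _⟩; linarith)).continuousAt.continuousWithinAt)
    (fun x hx => hderiv x (by rcases hx with ⟨h1, _⟩; linarith))
  -- MVT on [d-1, d]
  obtain ⟨b, hb, hgb⟩ := exists_hasDerivAt_eq_slope g g' (by linarith : d - 1 < d)
    (fun x hx => (hderiv x (by rcases hx with ⟨h1, _⟩; linarith)).continuousAt.continuousWithinAt)
    (fun x hx => hderiv x (by rcases hx with ⟨h1, _⟩; linarith))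
  have hba : b < a := lt_trans hb.2 ha.1
  -- MVT for g' on [b, a]
  obtain ⟨ξ, hξ, hgξ⟩ := exists_hasDerivAt_eq_slope g' (fun x => 2 * H * ((2 * H - 1) * x ^ (2 * H - 2))) hba
    (fun x hx => (hderiv' x (by rcases hx with ⟨h1, _⟩; rcases hb with ⟨hb1, _⟩; linarith)).continuousAt.continuousWithinAt)
    (fun x hx => hderiv' x (by rcases hx with ⟨h1, _⟩; rcases hb with ⟨hb1, _⟩; linarith))
  have hξpos : 0 < ξ := by rcases hξ with ⟨h1, _⟩; rcases hb with ⟨hb1, _⟩; linarith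
  have hξd : d - 1 ≤ ξ := by rcases hξ with ⟨h1, _⟩; rcases hb with ⟨hb1, _⟩; linarith
  -- rho in terms of g
  have hrho : rho H d = (g' a - g' b) / 2 := by
    unfold rho
    rw [abs_of_pos (by linarith : (0:ℝ) < d + 1), abs_of_pos (by linarith : (0:ℝ) < d - 1),
      abs_of_pos (by linarith : (0:ℝ) < d)]
    have e1 : g' a = g (d + 1) - g d := by rw [hga]; simp
    have e2 : g' b = g d - g (d - 1) := by rw [hgb]; simp
    rw [e1, e2, hg]
    ring
  have hab : a - b ≠ 0 := ne_of_gt (by linarith)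
  have hdiff : g' a - g' b = 2 * H * ((2 * H - 1) * ξ ^ (2 * H - 2)) * (a - b) := by
    rw [hgξ, div_mul_cancel₀ _ hab]
  set K := 2 * H * (2 * H - 1) with hK
  have hX : 2 * H * ((2 * H - 1) * ξ ^ (2 * H - 2)) = K * ξ ^ (2 * H - 2) := by rw [hK]; ring
  rw [hrho, hdiff, hX]
  have hab2 : |a - b| ≤ 2 := by
    rw [abs_le]; rcases ha with ⟨ha1, ha2⟩; rcases hb with ⟨hb1, hb2⟩
    constructor <;> linarith
  have hξb : ξ ^ (2 * H - 2) ≤ (d - 1) ^ (2 * H - 2) :=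
    Real.rpow_le_rpow_of_nonpos hd1' hξd (by linarith)
  have hξnn : (0:ℝ) ≤ ξ ^ (2 * H - 2) := Real.rpow_nonneg hξpos.le _
  have hC : |K| ≤ 3 := by
    rw [hK, abs_mul, abs_of_pos (by linarith : (0:ℝ) < 2 * H)]
    have : |2 * H - 1| ≤ 1 := by rw [abs_le]; constructor <;> linarith
    nlinarith
  have hdpos : (0:ℝ) ≤ (d - 1) ^ (2 * H - 2) := Real.rpow_nonneg hd1'.le _
  have h1 : |K * ξ ^ (2 * H - 2) * (a - b) / 2| = |K| * ξ ^ (2 * H - 2) * |a - b| / 2 := by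
    rw [abs_div, abs_mul, abs_mul, abs_of_nonneg hξnn, abs_two]
  rw [h1]
  calc |K| * ξ ^ (2 * H - 2) * |a - b| / 2
      ≤ 3 * (d - 1) ^ (2 * H - 2) * 2 / 2 := by
        gcongr
  _ = 3 * (d - 1) ^ (2 * H - 2) := by ring

lemma rho_sq_bound {H : ℝ} (hH : 0 < H) (hH2 : H < 3/4) {d : ℝ} (hd : 2 ≤ d) :
    (rho H d) ^ 2 ≤ 9 * (d - 1) ^ (4 * H - 4) := by
  have h := rho_bound hH hH2 hd
  have hd1' : (0:ℝ) < d - 1 := by linarith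
  have h2 : (rho H d) ^ 2 = |rho H d| ^ 2 := (sq_abs _).symm
  have h3 : (d - 1) ^ (4 * H - 4) = ((d - 1) ^ (2 * H - 2)) ^ 2 := by
    rw [show (4 * H - 4 : ℝ) = (2 * H - 2) * ((2:ℕ):ℝ) by push_cast; ring,
      Real.rpow_mul hd1'.le, Real.rpow_natCast]
  rw [h2, h3]
  have hnn : (0:ℝ) ≤ (d - 1) ^ (2 * H - 2) := Real.rpow_nonneg hd1'.le _
  nlinarith [abs_nonneg (rho H d)]

end FBMaux4

namespace FBMaux5
open Real MeasureTheory ProbabilityTheory FBMaux4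
open scoped NNReal ENNReal

lemma phi_sum_le {H : ℝ} (hH : 0 < H) (hH2 : H < 3/4) (n : ℕ) :
    ∑ j ∈ Finset.range n, (rho H (j:ℝ)) ^ 2
      ≤ 2 + 9 * ∑' i : ℕ, (i:ℝ) ^ (4 * H - 4) := by
  have hp : (4 * H - 4 : ℝ) < -1 := by linarith
  have hsum : Summable (fun i : ℕ => (i:ℝ) ^ (4 * H - 4)) := Real.summable_nat_rpow.2 hp
  have hTnn : 0 ≤ ∑' i : ℕ, (i:ℝ) ^ (4 * H - 4) :=
    tsum_nonneg fun i => Real.rpow_nonneg (Nat.cast_nonneg i) _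
  set T := ∑' i : ℕ, (i:ℝ) ^ (4 * H - 4) with hT
  have hφ0 : (rho H (0:ℝ)) ^ 2 = 1 := by
    rw [rho_zero hH]; norm_num
  have hφ1 : (rho H (1:ℝ)) ^ 2 ≤ 1 := by
    obtain ⟨hl, hr⟩ := abs_le.1 (rho_one_abs hH hH2)
    nlinarith
  match n with
  | 0 => simp; linarith
  | 1 => rw [Finset.sum_range_one, Nat.cast_zero]; linarith
  | (m+2) =>
    rw [Finset.sum_range_succ' _ (m+1), Finset.sum_range_succ' _ m]
    have htail : ∑ j ∈ Finset.range m, (rho H ((j+1+1:ℕ):ℝ)) ^ 2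
        ≤ 9 * T := by
      have step1 : ∑ j ∈ Finset.range m, (rho H ((j+1+1:ℕ):ℝ)) ^ 2
          ≤ ∑ j ∈ Finset.range m, 9 * (((j+1:ℕ):ℝ)) ^ (4 * H - 4) := by
        apply Finset.sum_le_sum
        intro j _
        have h2 : (2:ℝ) ≤ ((j+1+1:ℕ):ℝ) := by push_cast; linarith [Nat.cast_nonneg (α := ℝ) j]
        have := rho_sq_bound hH hH2 h2
        have harg : ((j+1+1:ℕ):ℝ) - 1 = ((j+1:ℕ):ℝ) := by push_cast; ring
        rwa [harg] at this
      have step2 : ∑ j ∈ Finset.range m, (((j+1:ℕ):ℝ)) ^ (4 * H - 4) ≤ T := by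
        have hzero : ((0:ℕ):ℝ) ^ (4 * H - 4) = 0 := by
          rw [Nat.cast_zero, Real.zero_rpow (by linarith)]
        have hre : ∑ j ∈ Finset.range (m+1), ((j:ℕ):ℝ) ^ (4 * H - 4)
            = ∑ j ∈ Finset.range m, (((j+1:ℕ):ℝ)) ^ (4 * H - 4) := by
          rw [Finset.sum_range_succ' _ m, hzero, add_zero]
        rw [← hre]
        exact Summable.sum_le_tsum _ (fun i _ => Real.rpow_nonneg (Nat.cast_nonneg i) _) hsum
      calc ∑ j ∈ Finset.range m, (rho H ((j+1+1:ℕ):ℝ)) ^ 2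
          ≤ ∑ j ∈ Finset.range m, 9 * (((j+1:ℕ):ℝ)) ^ (4 * H - 4) := step1
      _ = 9 * ∑ j ∈ Finset.range m, (((j+1:ℕ):ℝ)) ^ (4 * H - 4) := by rw [Finset.mul_sum]
      _ ≤ 9 * T := by linarith
    have h1 : (rho H ((0+1:ℕ):ℝ)) ^ 2 ≤ 1 := by norm_num at hφ1 ⊢; exact hφ1
    push_cast at htail hφ0 h1 ⊢
    linarith

variable {Ω : Type*} [MeasurableSpace Ω] {P : Measure Ω}

lemma main_bound [IsProbabilityMeasure P] {H : ℝ} (h0 : 0 < H) (h34 : H < 3/4)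
    (X : ℕ → Ω → ℝ) (hXm : ∀ k, Measurable (X k))
    (hXg : ∀ k, ∃ v : ℝ≥0, P.map (X k) = gaussianReal 0 v)
    (hXpg : ∀ k m, ∃ v : ℝ≥0, P.map (fun ω => X k ω + X m ω) = gaussianReal 0 v)
    (hXmg : ∀ k m, ∃ v : ℝ≥0, P.map (fun ω => X k ω - X m ω) = gaussianReal 0 v)
    (hXsq : ∀ k, ∫ ω, X k ω ^ 2 ∂P = 1)
    (hXcov : ∀ k m, ∫ ω, X k ω * X m ω ∂P = rho H ((k:ℝ) - (m:ℝ)))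
    (n : ℕ) (hn : 1 ≤ n) :
    ∫ ω, ((1 / (n : ℝ)) * ∑ k ∈ Finset.range n, ((X k ω) ^ 2 - 1)) ^ 2 ∂P
      ≤ (4 * (2 + 9 * ∑' i : ℕ, (i:ℝ) ^ (4 * H - 4))) / n := by
  set T := ∑' i : ℕ, (i:ℝ) ^ (4 * H - 4) with hT
  have hTnn : 0 ≤ T := tsum_nonneg fun i => Real.rpow_nonneg (Nat.cast_nonneg i) _
  -- per-pair results
  have hpair : ∀ k m : ℕ, Integrable (fun ω => (X k ω ^ 2 - 1) * (X m ω ^ 2 - 1)) P ∧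
      ∫ ω, (X k ω ^ 2 - 1) * (X m ω ^ 2 - 1) ∂P = 2 * (rho H ((k:ℝ) - (m:ℝ))) ^ 2 := by
    intro k m
    obtain ⟨i1, i2, hval⟩ := FBMaux3.pair_moments (hXm k) (hXm m) (hXg k) (hXg m)
      (hXpg k m) (hXmg k m)
    refine ⟨i1, ?_⟩
    rw [hval, hXsq k, hXsq m, hXcov k m]
    ring
  -- expansion of the square of the sum
  have key : ∫ ω, (∑ k ∈ Finset.range n, (X k ω ^ 2 - 1)) ^ 2 ∂P
      = ∑ k ∈ Finset.range n, ∑ m ∈ Finset.range n,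
          ∫ ω, (X k ω ^ 2 - 1) * (X m ω ^ 2 - 1) ∂P := by
    have hfe : (fun ω => (∑ k ∈ Finset.range n, (X k ω ^ 2 - 1)) ^ 2)
        = fun ω => ∑ k ∈ Finset.range n, ∑ m ∈ Finset.range n,
            (X k ω ^ 2 - 1) * (X m ω ^ 2 - 1) := by
      funext ω; rw [sq, Finset.sum_mul_sum]
    rw [hfe, integral_finset_sum _ (fun k _ => integrable_finset_sum _ (fun m _ => (hpair k m).1))]
    exact Finset.sum_congr rfl fun k _ => integral_finset_sum _ (fun m _ => (hpair k m).1)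
  -- bound on the inner sums
  have hinner : ∀ k ∈ Finset.range n,
      ∑ m ∈ Finset.range n, (rho H ((k:ℝ) - (m:ℝ))) ^ 2 ≤ 2 * (2 + 9 * T) := by
    intro k hk
    rw [Finset.mem_range] at hk
    have hφnn : ∀ j : ℕ, 0 ≤ (rho H (j:ℝ)) ^ 2 := fun j => sq_nonneg _
    rw [← Finset.sum_filter_add_sum_filter_not (Finset.range n) (fun m => m ≤ k)]
    have part1 : ∑ m ∈ (Finset.range n).filter (fun m => m ≤ k),
        (rho H ((k:ℝ) - (m:ℝ))) ^ 2 ≤ ∑ j ∈ Finset.range n, (rho H (j:ℝ)) ^ 2 := by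
      have heq : ∀ m ∈ (Finset.range n).filter (fun m => m ≤ k),
          (rho H ((k:ℝ) - (m:ℝ))) ^ 2 = (rho H (((k - m : ℕ)):ℝ)) ^ 2 := by
        intro m hm
        rw [Finset.mem_filter] at hm
        rw [Nat.cast_sub hm.2]
      rw [Finset.sum_congr rfl heq]
      have hinj : ∀ x ∈ (Finset.range n).filter (fun m => m ≤ k),
          ∀ y ∈ (Finset.range n).filter (fun m => m ≤ k), k - x = k - y → x = y := by
        intro x hx y hy hxy
        rw [Finset.mem_filter] at hx hy
        have h1 := hx.2; have h2 := hy.2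
        omega
      have himg : ∑ j ∈ ((Finset.range n).filter (fun m => m ≤ k)).image (fun m => k - m),
          (rho H (j:ℝ)) ^ 2
          = ∑ m ∈ (Finset.range n).filter (fun m => m ≤ k), (rho H (((k - m : ℕ)):ℝ)) ^ 2 :=
        Finset.sum_image hinj
      rw [← himg]
      apply Finset.sum_le_sum_of_subset_of_nonneg
      · intro j hj
        rw [Finset.mem_image] at hj
        obtain ⟨m, hm, rfl⟩ := hj
        rw [Finset.mem_filter, Finset.mem_range] at hm
        rw [Finset.mem_range]; omega
      · intro j _ _; exact hφnn j
    have part2 : ∑ m ∈ (Finset.range n).filter (fun m => ¬ m ≤ k),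
        (rho H ((k:ℝ) - (m:ℝ))) ^ 2 ≤ ∑ j ∈ Finset.range n, (rho H (j:ℝ)) ^ 2 := by
      have heq : ∀ m ∈ (Finset.range n).filter (fun m => ¬ m ≤ k),
          (rho H ((k:ℝ) - (m:ℝ))) ^ 2 = (rho H (((m - k : ℕ)):ℝ)) ^ 2 := by
        intro m hm
        rw [Finset.mem_filter] at hm
        have hmk : k ≤ m := by omega
        have : (k:ℝ) - (m:ℝ) = -(((m - k : ℕ)):ℝ) := by
          rw [Nat.cast_sub hmk]; ring
        rw [this, rho_neg]
      rw [Finset.sum_congr rfl heq]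
      have hinj : ∀ x ∈ (Finset.range n).filter (fun m => ¬ m ≤ k),
          ∀ y ∈ (Finset.range n).filter (fun m => ¬ m ≤ k), x - k = y - k → x = y := by
        intro x hx y hy hxy
        rw [Finset.mem_filter] at hx hy
        have h1 := hx.2; have h2 := hy.2
        omega
      have himg : ∑ j ∈ ((Finset.range n).filter (fun m => ¬ m ≤ k)).image (fun m => m - k),
          (rho H (j:ℝ)) ^ 2
          = ∑ m ∈ (Finset.range n).filter (fun m => ¬ m ≤ k), (rho H (((m - k : ℕ)):ℝ)) ^ 2 :=
        Finset.sum_image hinj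
      rw [← himg]
      apply Finset.sum_le_sum_of_subset_of_nonneg
      · intro j hj
        rw [Finset.mem_image] at hj
        obtain ⟨m, hm, rfl⟩ := hj
        rw [Finset.mem_filter, Finset.mem_range] at hm
        rw [Finset.mem_range]; omega
      · intro j _ _; exact hφnn j
    have hphis := phi_sum_le h0 h34 n
    rw [← hT] at hphis
    linarith
  -- total bound
  have htotal : ∫ ω, (∑ k ∈ Finset.range n, (X k ω ^ 2 - 1)) ^ 2 ∂P
      ≤ (n : ℝ) * (4 * (2 + 9 * T)) := by
    rw [key]
    have hterm : ∀ k ∈ Finset.range n,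
        ∑ m ∈ Finset.range n, ∫ ω, (X k ω ^ 2 - 1) * (X m ω ^ 2 - 1) ∂P
          ≤ 4 * (2 + 9 * T) := by
      intro k hk
      have : ∑ m ∈ Finset.range n, ∫ ω, (X k ω ^ 2 - 1) * (X m ω ^ 2 - 1) ∂P
          = 2 * ∑ m ∈ Finset.range n, (rho H ((k:ℝ) - (m:ℝ))) ^ 2 := by
        rw [Finset.mul_sum]
        exact Finset.sum_congr rfl fun m _ => (hpair k m).2
      rw [this]
      linarith [hinner k hk]
    calc ∑ k ∈ Finset.range n, ∑ m ∈ Finset.range n,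
          ∫ ω, (X k ω ^ 2 - 1) * (X m ω ^ 2 - 1) ∂P
        ≤ ∑ k ∈ Finset.range n, (4 * (2 + 9 * T)) := Finset.sum_le_sum hterm
    _ = (n : ℝ) * (4 * (2 + 9 * T)) := by
        rw [Finset.sum_const, Finset.card_range, nsmul_eq_mul]
  -- conclude
  have hn0 : (n:ℝ) ≠ 0 := Nat.cast_ne_zero.2 (by omega)
  have hnpos : (0:ℝ) < n := by positivity
  have hre : (fun ω => ((1 / (n : ℝ)) * ∑ k ∈ Finset.range n, ((X k ω) ^ 2 - 1)) ^ 2)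
      = fun ω => (1 / (n : ℝ)) ^ 2 * (∑ k ∈ Finset.range n, ((X k ω) ^ 2 - 1)) ^ 2 := by
    funext ω; rw [mul_pow]
  rw [hre, integral_const_mul]
  have hfinal : (1 / (n : ℝ)) ^ 2 * ((n : ℝ) * (4 * (2 + 9 * T)))
      = (4 * (2 + 9 * T)) / n := by
    field_simp
  calc (1 / (n : ℝ)) ^ 2 * ∫ ω, (∑ k ∈ Finset.range n, (X k ω ^ 2 - 1)) ^ 2 ∂P
      ≤ (1 / (n : ℝ)) ^ 2 * ((n : ℝ) * (4 * (2 + 9 * T))) := by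
        apply mul_le_mul_of_nonneg_left htotal (by positivity)
  _ = (4 * (2 + 9 * T)) / n := hfinal

end FBMaux5

end FBMpre

open MeasureTheory ProbabilityTheory Filter

/-- **Variance bound for quadratic variations of fBm, `H < 3/4`:**
`E | n⁻¹ ∑_{k<n} (|β_{k+1} - β_k|² - 1) |² ≤ c_H / n`. -/
theorem stmt3 {Ω : Type*} [MeasurableSpace Ω] (P : Measure Ω) [IsProbabilityMeasure P]
    (H : ℝ) (hH : H ∈ Set.Ioo (0 : ℝ) (3 / 4)) (β : ℝ → Ω → ℝ) (hβ : IsFBM P H β) :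
    ∃ c : ℝ, 0 < c ∧ ∀ n : ℕ, 1 ≤ n →
      ∫ ω, ((1 / (n : ℝ)) * ∑ k ∈ Finset.range n,
          ((β ((k : ℝ) + 1) ω - β (k : ℝ) ω) ^ 2 - 1)) ^ 2 ∂P ≤ c / n := by
  obtain ⟨hβm, hβg, hβcov⟩ := hβ
  obtain ⟨h0, h34⟩ := hH
  set X : ℕ → Ω → ℝ := fun k ω => β ((k : ℝ) + 1) ω - β (k : ℝ) ω with hXdef
  have hXm : ∀ k, Measurable (X k) := fun k => (hβm _).sub (hβm _)
  -- one-dimensional Gaussianity of each β s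
  have hβg1 : ∀ s : ℝ, ∃ v : NNReal, P.map (β s) = gaussianReal 0 v := by
    intro s
    obtain ⟨v, hv⟩ := hβg 1 ![1] ![s]
    refine ⟨v, ?_⟩
    have he : (fun ω => ∑ i : Fin 1, ![(1:ℝ)] i * β (![s] i) ω) = β s := by
      funext ω; simp
    rwa [he] at hv
  -- integrability of products
  have iββ : ∀ s t : ℝ, Integrable (fun ω => β s ω * β t ω) P := by
    intro s t
    obtain ⟨vs, hvs⟩ := hβg1 s
    obtain ⟨vt, hvt⟩ := hβg1 t
    have is2 := FBMaux2.integrable_pow_of_map (hβm s) hvs 2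
    have it2 := FBMaux2.integrable_pow_of_map (hβm t) hvt 2
    refine Integrable.mono' ((is2.const_mul (1/2)).add (it2.const_mul (1/2)))
      ((hβm s).mul (hβm t)).aestronglyMeasurable (ae_of_all _ fun ω => ?_)
    simpa only [Real.norm_eq_abs, Pi.add_apply] using FBMaux3.abs_mul_le (β s ω) (β t ω)
  -- covariance of increments
  have hXcov : ∀ k m : ℕ, ∫ ω, X k ω * X m ω ∂P = FBMaux4.rho H ((k:ℝ) - (m:ℝ)) := by
    intro k m
    have hexp : (fun ω => X k ω * X m ω)
        = fun ω => β ((k:ℝ)+1) ω * β ((m:ℝ)+1) ω - β ((k:ℝ)+1) ω * β (m:ℝ) ω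
            - (β (k:ℝ) ω * β ((m:ℝ)+1) ω - β (k:ℝ) ω * β (m:ℝ) ω) := by
      funext ω; rw [hXdef]; ring
    have i1 := iββ ((k:ℝ)+1) ((m:ℝ)+1)
    have i2 := iββ ((k:ℝ)+1) (m:ℝ)
    have i3 := iββ (k:ℝ) ((m:ℝ)+1)
    have i4 := iββ (k:ℝ) (m:ℝ)
    have i12 : Integrable (fun ω => β ((k:ℝ)+1) ω * β ((m:ℝ)+1) ω
        - β ((k:ℝ)+1) ω * β (m:ℝ) ω) P := i1.sub i2
    have i34 : Integrable (fun ω => β (k:ℝ) ω * β ((m:ℝ)+1) ω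
        - β (k:ℝ) ω * β (m:ℝ) ω) P := i3.sub i4
    rw [hexp, integral_sub i12 i34, integral_sub i1 i2, integral_sub i3 i4,
      hβcov, hβcov, hβcov, hβcov]
    rw [show ((k:ℝ)+1 - ((m:ℝ)+1)) = (k:ℝ) - (m:ℝ) by ring,
      show ((k:ℝ)+1 - (m:ℝ)) = ((k:ℝ) - (m:ℝ)) + 1 by ring,
      show ((k:ℝ) - ((m:ℝ)+1)) = ((k:ℝ) - (m:ℝ)) - 1 by ring]
    unfold FBMaux4.rho
    ring
  -- unit variance of increments
  have hXsq : ∀ k : ℕ, ∫ ω, X k ω ^ 2 ∂P = 1 := by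
    intro k
    have he : (fun ω => X k ω ^ 2) = fun ω => X k ω * X k ω := by funext ω; ring
    rw [he, hXcov k k, sub_self, FBMaux4.rho_zero h0]
  -- Gaussianity of increments and of their sums/differences
  have hXg : ∀ k : ℕ, ∃ v : NNReal, P.map (X k) = gaussianReal 0 v := by
    intro k
    obtain ⟨v, hv⟩ := hβg 2 ![1, -1] ![(k:ℝ)+1, (k:ℝ)]
    refine ⟨v, ?_⟩
    have he : (fun ω => ∑ i : Fin 2, ![(1:ℝ), -1] i * β (![(k:ℝ)+1, (k:ℝ)] i) ω) = X k := by
      funext ω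
      simp [Fin.sum_univ_two, hXdef]
      ring
    rwa [he] at hv
  have hXpg : ∀ k m : ℕ, ∃ v : NNReal,
      P.map (fun ω => X k ω + X m ω) = gaussianReal 0 v := by
    intro k m
    obtain ⟨v, hv⟩ := hβg 4 ![1, -1, 1, -1] ![(k:ℝ)+1, (k:ℝ), (m:ℝ)+1, (m:ℝ)]
    refine ⟨v, ?_⟩
    have he : (fun ω => ∑ i : Fin 4, ![(1:ℝ), -1, 1, -1] i
        * β (![(k:ℝ)+1, (k:ℝ), (m:ℝ)+1, (m:ℝ)] i) ω) = fun ω => X k ω + X m ω := by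
      funext ω
      simp [Fin.sum_univ_four, hXdef]
      ring
    rwa [he] at hv
  have hXmg : ∀ k m : ℕ, ∃ v : NNReal,
      P.map (fun ω => X k ω - X m ω) = gaussianReal 0 v := by
    intro k m
    obtain ⟨v, hv⟩ := hβg 4 ![1, -1, -1, 1] ![(k:ℝ)+1, (k:ℝ), (m:ℝ)+1, (m:ℝ)]
    refine ⟨v, ?_⟩
    have he : (fun ω => ∑ i : Fin 4, ![(1:ℝ), -1, -1, 1] i
        * β (![(k:ℝ)+1, (k:ℝ), (m:ℝ)+1, (m:ℝ)] i) ω) = fun ω => X k ω - X m ω := by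
      funext ω
      simp [Fin.sum_univ_four, hXdef]
      ring
    rwa [he] at hv
  -- conclude using the abstract bound
  refine ⟨4 * (2 + 9 * ∑' i : ℕ, (i:ℝ) ^ (4 * H - 4)), ?_, ?_⟩
  · have hTnn : 0 ≤ ∑' i : ℕ, (i:ℝ) ^ (4 * H - 4) :=
      tsum_nonneg fun i => Real.rpow_nonneg (Nat.cast_nonneg i) _
    linarith
  · intro n hn
    exact FBMaux5.main_bound h0 h34 X hXm hXg hXpg hXmg hXsq hXcov n hn
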